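/- A subset 𝔞 of the algebra t_n of n×n upper triangular matrices over a field F is a nilpotent two-sided ideal if and only if 𝔞 = n_P for some poset P ⊆ [[n]] satisfying the normality condition: (i,l) ∉ P implies (j,k) ∉ P for all 1 ≤ i ≤ j < k ≤ l ≤ n. -/

import Mathlib

open scoped Classical

abbrev Mat (n : ℕ) (F : Type*) := Matrix (Fin n) (Fin n) F

/-- The set of positions strictly above the diagonal. -/
def PosUpper (n : ℕ) : Set (Fin n × Fin n) := {p | p.1 < p.2}

/-- A poset on `[n]`: a set of strictly-upper positions closed under composition. -/
def IsPoset {n : ℕ} (P : Set (Fin n × Fin n)) : Prop :=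
  P ⊆ PosUpper n ∧ ∀ i j k : Fin n, (i, j) ∈ P → (j, k) ∈ P → (i, k) ∈ P

/-- The normality condition for a pattern poset. -/
def NormalPoset {n : ℕ} (P : Set (Fin n × Fin n)) : Prop :=
  ∀ i j k l : Fin n, i ≤ j → j < k → k ≤ l → (i, l) ∉ P → (j, k) ∉ P

/-- The pattern group `U_P` (as a set of matrices). -/
def UPg {n : ℕ} {F : Type*} [Field F] (P : Set (Fin n × Fin n)) : Set (Mat n F) :=
  {g | (∀ i, g i i = 1) ∧ ∀ i j : Fin n, i ≠ j → (i, j) ∉ P → g i j = 0}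

/-- The algebra `n_P` of strictly upper triangular matrices supported on `P`. -/
def nPa {n : ℕ} {F : Type*} [Field F] (P : Set (Fin n × Fin n)) : Set (Mat n F) :=
  {X | ∀ i j : Fin n, (i, j) ∉ P → X i j = 0}

/-- The support of a matrix. -/
def msupp {n : ℕ} {F : Type*} [Field F] (X : Mat n F) : Set (Fin n × Fin n) :=
  {p | X p.1 p.2 ≠ 0}

/-- `F_q`-labeled set partitions: matrices in `n_P` with at most one nonzero entry
in each row and each column. -/
def SPa {n : ℕ} {F : Type*} [Field F] (P : Set (Fin n × Fin n)) : Set (Mat n F) :=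
  {X | X ∈ nPa P ∧ (∀ i j j' : Fin n, X i j ≠ 0 → X i j' ≠ 0 → j = j') ∧
       (∀ i i' j : Fin n, X i j ≠ 0 → X i' j ≠ 0 → i = i')}

private lemma squeeze {n : ℕ} {F : Type*} [Field F] (x : Mat n F) (i j : Fin n) :
    Matrix.single i i (1 : F) * x * Matrix.single j j (1 : F)
      = Matrix.single i j (x i j) := by
  ext p q
  rcases eq_or_ne q j with rfl | hq
  · rw [Matrix.mul_single_apply_same]
    rcases eq_or_ne p i with rfl | hp
    · simp
    · rw [Matrix.single_mul_apply_of_ne (h := hp)]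
      simp [hp, Ne.symm hp]
  · rw [Matrix.mul_single_apply_of_ne (hbj := hq)]
    simp [Ne.symm hq]

private lemma sbm_pow {n : ℕ} {F : Type*} [Field F] (i : Fin n) (c : F) (m : ℕ) (hm : 0 < m) :
    (Matrix.single i i c) ^ m = Matrix.single i i (c ^ m) := by
  induction m with
  | zero => omega
  | succ k ih =>
    rcases Nat.eq_zero_or_pos k with rfl | hk
    · simp
    · rw [pow_succ, ih hk, Matrix.single_mul_single_same, ← pow_succ]

private lemma prod_strict {n : ℕ} {F : Type*} [Field F] (L : List (Mat n F))
    (h : ∀ X ∈ L, ∀ i j : Fin n, ¬ i < j → X i j = 0) :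
    ∀ i j : Fin n, (j : ℕ) < (i : ℕ) + L.length → L.prod i j = 0 := by
  induction L with
  | nil =>
    intro i j hij
    simp only [List.length_nil, Nat.add_zero] at hij
    simp only [List.prod_nil]
    exact Matrix.one_apply_ne (by intro e; rw [e] at hij; omega)
  | cons x L ih =>
    intro i j hij
    rw [List.prod_cons, Matrix.mul_apply]
    apply Finset.sum_eq_zero
    intro k _
    by_cases hik : i < k
    · rw [ih (fun X hX => h X (List.mem_cons_of_mem _ hX)) k j
        (by simp only [List.length_cons] at hij; have := hik; omega), mul_zero]
    · rw [h x (List.mem_cons_self) i k hik, zero_mul]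

private lemma sbm_upper {n : ℕ} {F : Type*} [Field F] {i j : Fin n} (hij : i ≤ j) (c : F) :
    ∀ p q : Fin n, q < p → Matrix.single i j c p q = 0 := by
  intro p q hpq
  apply Matrix.single_apply_of_ne
  rintro ⟨rfl, rfl⟩
  exact absurd hij (not_le.mpr hpq)


/-- A subset of the algebra of upper triangular matrices is a
nilpotent two-sided ideal iff it equals `n_P` for a poset `P` normal in `[[n]]`. -/
theorem nilpotent_ideal_iff_normal_pattern {n : ℕ} {F : Type*} [Field F]
    (a : Set (Mat n F)) (ha : a ⊆ {X : Mat n F | ∀ i j : Fin n, j < i → X i j = 0}) :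
    ((0 : Mat n F) ∈ a ∧ (∀ x ∈ a, ∀ y ∈ a, x + y ∈ a) ∧ (∀ x ∈ a, -x ∈ a) ∧
      (∀ c : F, ∀ x ∈ a, c • x ∈ a) ∧
      (∀ x ∈ a, ∀ t : Mat n F, (∀ i j : Fin n, j < i → t i j = 0) →
        t * x ∈ a ∧ x * t ∈ a) ∧
      (∃ m : ℕ, 0 < m ∧ ∀ f : Fin m → Mat n F, (∀ i, f i ∈ a) →
        (List.ofFn f).prod = 0)) ↔
      ∃ P : Set (Fin n × Fin n), IsPoset P ∧ NormalPoset P ∧ a = nPa P := by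
  constructor
  · rintro ⟨h0, hadd, -, hsmul, hideal, m, hm, hnil⟩
    set P : Set (Fin n × Fin n) := {p | p.1 < p.2 ∧ ∃ x ∈ a, x p.1 p.2 ≠ 0} with hP
    -- basic: for x ∈ a, the squeezed basis matrix is in a
    have hsq : ∀ x ∈ a, ∀ i j : Fin n, i ≤ j →
        Matrix.single i j (x i j) ∈ a := by
      intro x hx i j hij
      have h1 := (hideal x hx (Matrix.single i i (1 : F))
        (sbm_upper le_rfl 1)).1
      have h2 := (hideal _ h1 (Matrix.single j j (1 : F))
        (sbm_upper le_rfl 1)).2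
      rwa [squeeze] at h2
    -- diagonal entries of elements of a are zero
    have hdiag : ∀ x ∈ a, ∀ i : Fin n, x i i = 0 := by
      intro x hx i
      have hy : Matrix.single i i (x i i) ∈ a := hsq x hx i i le_rfl
      have := hnil (fun _ => Matrix.single i i (x i i)) (fun _ => hy)
      rw [List.ofFn_const, List.prod_replicate, sbm_pow i (x i i) m hm] at this
      have h0' := congrArg (fun M => M i i) this
      simp only [Matrix.single_apply_same, Matrix.zero_apply] at h0'
      exact pow_eq_zero_iff hm.ne' |>.mp h0'
    -- key: basis matrices at positions of P are in a
    have hbasis : ∀ p ∈ P, ∀ c : F, Matrix.single p.1 p.2 c ∈ a := by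
      rintro ⟨i, j⟩ ⟨hij, x, hx, hne⟩ c
      have h1 : Matrix.single i j (x i j) ∈ a := hsq x hx i j (le_of_lt hij)
      have := hsmul (c / x i j) _ h1
      rwa [Matrix.smul_single, smul_eq_mul, div_mul_cancel₀ c hne] at this
    refine ⟨P, ⟨fun p hp => hp.1, ?_⟩, ?_, ?_⟩
    · -- transitivity
      rintro i j k ⟨hij, hij'⟩ ⟨hjk, x, hx, hne⟩
      refine ⟨lt_trans hij hjk, ?_⟩
      have hb : Matrix.single j k (x j k) ∈ a := hsq x hx j k (le_of_lt hjk)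
      have ht := (hideal _ hb (Matrix.single i j (1 : F))
        (sbm_upper (le_of_lt hij) 1)).1
      rw [Matrix.single_mul_single_same, one_mul] at ht
      exact ⟨_, ht, by simp [hne]⟩
    · -- normality
      intro i j k l hij hjk hkl hil hjkP
      apply hil
      obtain ⟨hjk', x, hx, hne⟩ := hjkP
      have hb : Matrix.single j k (x j k) ∈ a := hsq x hx j k (le_of_lt hjk')
      have h1 := (hideal _ hb (Matrix.single i j (1 : F)) (sbm_upper hij 1)).1
      rw [Matrix.single_mul_single_same, one_mul] at h1
      have h2 := (hideal _ h1 (Matrix.single k l (1 : F)) (sbm_upper hkl 1)).2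
      rw [Matrix.single_mul_single_same, mul_one] at h2
      exact ⟨lt_of_le_of_lt hij (lt_of_lt_of_le hjk hkl), _, h2, by simp [hne]⟩
    · -- a = nPa P
      apply Set.eq_of_subset_of_subset
      · intro x hx i j hij
        rcases lt_trichotomy i j with h | h | h
        · by_contra hne
          exact hij ⟨h, x, hx, hne⟩
        · rw [h]; exact hdiag x hx j
        · exact ha hx i j h
      · intro X hX
        rw [Matrix.matrix_eq_sum_single X]
        apply Finset.sum_induction _ (· ∈ a) (fun u v hu hv => hadd u hu v hv) h0
        intro i _
        apply Finset.sum_induction _ (· ∈ a) (fun u v hu hv => hadd u hu v hv) h0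
        intro j _
        by_cases hp : (i, j) ∈ P
        · exact hbasis (i, j) hp (X i j)
        · rw [hX i j hp, Matrix.single_zero]; exact h0
  · rintro ⟨P, ⟨hPU, hPtrans⟩, hN, rfl⟩
    have hstrict : ∀ X ∈ nPa (F := F) P, ∀ i j : Fin n, ¬ i < j → X i j = 0 := by
      intro X hX i j hij
      apply hX
      intro hmem
      exact hij (hPU hmem)
    refine ⟨?_, ?_, ?_, ?_, ?_, n + 1, Nat.succ_pos n, ?_⟩
    · intro i j _; rfl
    · intro x hx y hy i j hij
      show x i j + y i j = 0
      rw [hx i j hij, hy i j hij, add_zero]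
    · intro x hx i j hij
      show -(x i j) = 0
      rw [hx i j hij, neg_zero]
    · intro c x hx i j hij
      show c * x i j = 0
      rw [hx i j hij, mul_zero]
    · intro x hx t ht
      constructor
      · intro i j hij
        rw [Matrix.mul_apply]
        apply Finset.sum_eq_zero
        intro k _
        by_cases hik : i ≤ k
        · by_cases hkj : (k, j) ∈ P
          · exact absurd hkj (hN i k j j hik (hPU hkj) le_rfl hij)
          · rw [hx k j hkj, mul_zero]
        · rw [ht i k (lt_of_not_ge hik), zero_mul]
      · intro i j hij
        rw [Matrix.mul_apply]
        apply Finset.sum_eq_zero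
        intro k _
        by_cases hkj : k ≤ j
        · by_cases hik : (i, k) ∈ P
          · exact absurd hik (hN i i k j le_rfl (hPU hik) hkj hij)
          · rw [hx i k hik, zero_mul]
        · rw [ht k j (lt_of_not_ge hkj), mul_zero]
    · intro f hf
      ext i j
      rw [Matrix.zero_apply]
      apply prod_strict _ ?_ i j
      · rw [List.length_ofFn]; omega
      · intro X hX
        obtain ⟨k, rfl⟩ := List.mem_ofFn.mp hX
        exact hstrict _ (hf k)
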